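/- Let ε ∈ (0,1/3]. Suppose w : [0,1] → ℝ is twice continuously differentiable with w(1) = 0 and w'(1) = 0, and T : [0,1] → ℝ is continuously differentiable with T(1) = 0. Then ∫_{1−ε}^{1} z^{−2} |w(z) T(z)| dz ≤ (5/14) ε^{7/2} · (sup_{z∈[0,1]} |w''(z)|) · (∫₀¹ T'(z)² dz)^{1/2}. -/

import Mathlib

open MeasureTheory

/-- Upper boundary-layer estimate in the no-slip proof: for `ε ∈ (0,1/3]`, if `w` is C²
with `w 1 = 0` and `w' 1 = 0`, and `T` is C¹ with `T 1 = 0`, then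
`∫_{1-ε}^1 z⁻² |w T| ≤ (5/14) ε^{7/2} (sup_{[0,1]} |w''|) ‖T'‖₂`. -/
theorem upper_boundary_layer_estimate_no_slip
    (ε : ℝ) (hε : ε ∈ Set.Ioc (0:ℝ) (1/3))
    (w T : ℝ → ℝ) (hw : ContDiff ℝ 2 w) (hT : ContDiff ℝ 1 T)
    (hw1 : w 1 = 0) (hw'1 : deriv w 1 = 0) (hT1 : T 1 = 0) :
    (∫ z in (1-ε)..1, z⁻¹^2 * |w z * T z|) ≤
      (5/14) * ε ^ ((7:ℝ)/2) * (⨆ z : Set.Icc (0:ℝ) 1, |iteratedDeriv 2 w z.1|) *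
        (∫ z in (0:ℝ)..1, (deriv T z)^2) ^ ((1:ℝ)/2) := by
  obtain ⟨hε0, hε3⟩ := hε
  set M := (⨆ z : Set.Icc (0:ℝ) 1, |iteratedDeriv 2 w z.1|) with hMdef
  set N := (∫ z in (0:ℝ)..1, (deriv T z)^2) ^ ((1:ℝ)/2) with hNdef
  have h1ε : (2:ℝ)/3 ≤ 1 - ε := by linarith
  have h1ε1 : 1 - ε ≤ 1 := by linarith
  -- regularity facts
  have h21 : ContDiff ℝ (1+1) w := by
    have : ((1:WithTop ℕ∞)+1) = 2 := by norm_num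
    rwa [this]
  have hw' : ContDiff ℝ 1 (deriv w) := (contDiff_succ_iff_deriv.mp h21).2.2
  have hdw : Differentiable ℝ w := (contDiff_succ_iff_deriv.mp h21).1
  have hdw' : Differentiable ℝ (deriv w) := hw'.differentiable one_ne_zero
  have hcw' : Continuous (deriv w) := hdw'.continuous
  have hcw'' : Continuous (deriv (deriv w)) := hw'.continuous_deriv le_rfl
  have hdT : Differentiable ℝ T := hT.differentiable one_ne_zero
  have hcT' : Continuous (deriv T) := hT.continuous_deriv le_rfl
  have h2 : iteratedDeriv 2 w = deriv (deriv w) := by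
    rw [iteratedDeriv_succ, iteratedDeriv_one]
  -- sup bound
  have hbdd : BddAbove (Set.range fun z : Set.Icc (0:ℝ) 1 => |iteratedDeriv 2 w z.1|) := by
    have hc : Continuous fun z : Set.Icc (0:ℝ) 1 => |iteratedDeriv 2 w z.1| := by
      rw [h2]; exact (hcw''.abs).comp continuous_subtype_val
    exact (isCompact_range hc).bddAbove
  have hM : ∀ t ∈ Set.Icc (0:ℝ) 1, |deriv (deriv w) t| ≤ M := by
    intro t ht
    calc |deriv (deriv w) t| = |iteratedDeriv 2 w t| := by rw [h2]
      _ ≤ M := le_ciSup hbdd (⟨t, ht⟩ : Set.Icc (0:ℝ) 1)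
  have h1mem : (1:ℝ) ∈ Set.Icc (0:ℝ) 1 := by norm_num
  have hM0 : 0 ≤ M := le_trans (abs_nonneg _) (hM 1 h1mem)
  have hN0 : 0 ≤ N := Real.rpow_nonneg (intervalIntegral.integral_nonneg zero_le_one
    (fun t _ => sq_nonneg _)) _
  -- bound on deriv w
  have hw'bd : ∀ t ∈ Set.Icc (0:ℝ) 1, |deriv w t| ≤ M * (1 - t) := by
    intro t ht
    have key := (convex_Icc (0:ℝ) 1).norm_image_sub_le_of_norm_deriv_le
      (f := deriv w) (fun x _ => hdw' x)
      (fun x hx => hM x hx) h1mem ht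
    rw [hw'1, sub_zero] at key
    calc |deriv w t| = ‖deriv w t‖ := rfl
      _ ≤ M * ‖t - 1‖ := key
      _ = M * (1 - t) := by
          rw [Real.norm_eq_abs, abs_sub_comm, abs_of_nonneg (by linarith [ht.2])]
  -- bound on w
  have hwbd : ∀ z ∈ Set.Icc (0:ℝ) 1, |w z| ≤ M * (1 - z)^2 / 2 := by
    intro z hz
    have hz1 : z ≤ 1 := hz.2
    have hftc : ∫ t in z..1, deriv w t = w 1 - w z :=
      intervalIntegral.integral_deriv_eq_sub (fun x _ => hdw x)
        (hcw'.intervalIntegrable _ _)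
    have habs : |w z| = |∫ t in z..1, deriv w t| := by
      rw [hftc, hw1, zero_sub, abs_neg]
    have hstep : (∫ t in z..1, |deriv w t|) ≤ ∫ t in z..1, M * (1 - t) := by
      refine intervalIntegral.integral_mono_on hz1
        ((hcw'.abs).intervalIntegrable _ _)
        ((continuous_const.mul (continuous_const.sub continuous_id)).intervalIntegrable _ _)
        (fun t ht => hw'bd t ⟨le_trans hz.1 ht.1, ht.2⟩)
    have hcomp : (∫ t in z..1, M * (1 - t)) = M * (1 - z)^2 / 2 := by
      rw [intervalIntegral.integral_const_mul]
      have : (∫ t in z..1, (1 - t)) = (1 - z)^2 / 2 := by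
        rw [intervalIntegral.integral_sub (intervalIntegrable_const)
          (intervalIntegral.intervalIntegrable_id), integral_id,
          intervalIntegral.integral_const]
        simp only [smul_eq_mul, mul_one]
        ring
      rw [this]; ring
    calc |w z| = |∫ t in z..1, deriv w t| := habs
      _ ≤ ∫ t in z..1, |deriv w t| := intervalIntegral.abs_integral_le_integral_abs hz1
      _ ≤ ∫ t in z..1, M * (1 - t) := hstep
      _ = M * (1 - z)^2 / 2 := hcomp
  -- bound on T
  have hTbd : ∀ z ∈ Set.Icc (0:ℝ) 1, |T z| ≤ Real.sqrt (1 - z) * N := by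
    intro z hz
    have hz1 : z ≤ 1 := hz.2
    set Q := ∫ t in z..1, (deriv T t)^2 with hQdef
    set I := ∫ t in z..1, |deriv T t| with hIdef
    have hI0 : 0 ≤ I := intervalIntegral.integral_nonneg hz1 (fun t _ => abs_nonneg _)
    have hQ0 : 0 ≤ Q := intervalIntegral.integral_nonneg hz1 (fun t _ => sq_nonneg _)
    have hQle : Q ≤ ∫ t in (0:ℝ)..1, (deriv T t)^2 := by
      refine intervalIntegral.integral_mono_interval hz.1 hz1 le_rfl
        (Filter.Eventually.of_forall (fun t => sq_nonneg _))
        (((hcT'.pow 2).intervalIntegrable _ _))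
    -- Cauchy-Schwarz via discriminant
    have hquad : ∀ c : ℝ, 0 ≤ (1 - z) * (c * c) + (-(2*I)) * c + Q := by
      intro c
      have h0 : 0 ≤ ∫ t in z..1, (|deriv T t| - c)^2 :=
        intervalIntegral.integral_nonneg hz1 (fun t _ => sq_nonneg _)
      have hexp : (∫ t in z..1, (|deriv T t| - c)^2)
          = Q - 2*c*I + (1 - z) * c^2 := by
        have hptw : ∀ t : ℝ, (|deriv T t| - c)^2
            = (deriv T t)^2 - 2*c*|deriv T t| + c^2 := by
          intro t; rw [sub_sq, sq_abs]; ring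
        simp_rw [hptw]
        rw [intervalIntegral.integral_add (f := fun t => deriv T t ^ 2 - 2 * c * |deriv T t|) (g := fun _ => c ^ 2) (((hcT'.pow 2).sub
            (continuous_const.mul hcT'.abs)).intervalIntegrable _ _)
            (continuous_const.intervalIntegrable _ _),
          intervalIntegral.integral_sub (f := fun t => deriv T t ^ 2) (g := fun t => 2 * c * |deriv T t|) ((hcT'.pow 2).intervalIntegrable _ _)
            ((continuous_const.mul hcT'.abs).intervalIntegrable _ _),
          intervalIntegral.integral_const_mul, intervalIntegral.integral_const]
        simp only [smul_eq_mul]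
        try ring
      rw [hexp] at h0
      nlinarith [h0]
    have hdisc := discrim_le_zero hquad
    rw [discrim] at hdisc
    have hI2 : I^2 ≤ (1 - z) * Q := by nlinarith [hdisc]
    have hIle : I ≤ Real.sqrt ((1 - z) * Q) := by
      rw [show Real.sqrt ((1-z)*Q) = ((1-z)*Q) ^ ((1:ℝ)/2) from Real.sqrt_eq_rpow _]
      rw [show I = (I^2) ^ ((1:ℝ)/2) by
        rw [← Real.rpow_natCast I 2, ← Real.rpow_mul (by positivity)]
        norm_num]
      exact Real.rpow_le_rpow (by positivity) hI2 (by norm_num)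
    have hftc : ∫ t in z..1, deriv T t = T 1 - T z :=
      intervalIntegral.integral_deriv_eq_sub (fun x _ => hdT x)
        (hcT'.intervalIntegrable _ _)
    have habs : |T z| = |∫ t in z..1, deriv T t| := by
      rw [hftc, hT1, zero_sub, abs_neg]
    have hNsqrt : N = Real.sqrt (∫ t in (0:ℝ)..1, (deriv T t)^2) := by
      rw [hNdef, Real.sqrt_eq_rpow]
    calc |T z| = |∫ t in z..1, deriv T t| := habs
      _ ≤ I := intervalIntegral.abs_integral_le_integral_abs hz1
      _ ≤ Real.sqrt ((1 - z) * Q) := hIle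
      _ = Real.sqrt (1 - z) * Real.sqrt Q := Real.sqrt_mul (by linarith) _
      _ ≤ Real.sqrt (1 - z) * N := by
          rw [hNsqrt]
          exact mul_le_mul_of_nonneg_left (Real.sqrt_le_sqrt hQle) (Real.sqrt_nonneg _)
  -- pointwise bound on the integrand
  have hptw : ∀ z ∈ Set.Icc (1-ε) 1,
      z⁻¹^2 * |w z * T z| ≤ (5/4 * M * N) * ((1 - z)^2 * Real.sqrt (1 - z)) := by
    intro z hz
    have hz23 : (2:ℝ)/3 ≤ z := le_trans h1ε hz.1
    have hz0 : (0:ℝ) < z := by linarith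
    have hzmem : z ∈ Set.Icc (0:ℝ) 1 := ⟨le_of_lt hz0, hz.2⟩
    have hinv : z⁻¹^2 ≤ 5/2 := by
      have h1 : z⁻¹ ≤ 3/2 := by
        rw [inv_le_comm₀ hz0 (by norm_num)]; linarith
      have h2 : (0:ℝ) ≤ z⁻¹ := by positivity
      nlinarith
    have hprod : |w z * T z| ≤ (M * (1 - z)^2 / 2) * (Real.sqrt (1 - z) * N) := by
      rw [abs_mul]
      exact mul_le_mul (hwbd z hzmem) (hTbd z hzmem) (abs_nonneg _)
        (by positivity)
    calc z⁻¹^2 * |w z * T z| ≤ (5/2) * ((M * (1 - z)^2 / 2) * (Real.sqrt (1 - z) * N)) := by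
          refine mul_le_mul hinv hprod (abs_nonneg _) (by norm_num)
      _ = (5/4 * M * N) * ((1 - z)^2 * Real.sqrt (1 - z)) := by ring
  -- integrate the pointwise bound
  have hfint : IntervalIntegrable (fun z => z⁻¹^2 * |w z * T z|) volume (1-ε) 1 := by
    apply ContinuousOn.intervalIntegrable
    have huIcc : Set.uIcc (1-ε) 1 = Set.Icc (1-ε) 1 := Set.uIcc_of_le h1ε1
    rw [huIcc]
    have hne : ∀ z ∈ Set.Icc (1-ε) 1, z ≠ 0 := by
      intro z hz; have : (2:ℝ)/3 ≤ z := le_trans h1ε hz.1; linarith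
    exact ((continuousOn_id.inv₀ hne).pow 2).mul
      (((hw.continuous.mul hT.continuous).abs).continuousOn)
  have hgint : IntervalIntegrable
      (fun z => (5/4 * M * N) * ((1 - z)^2 * Real.sqrt (1 - z))) volume (1-ε) 1 := by
    exact (continuous_const.mul (((continuous_const.sub continuous_id).pow 2).mul
      (Real.continuous_sqrt.comp (continuous_const.sub continuous_id)))).intervalIntegrable _ _
  have hmono := intervalIntegral.integral_mono_on h1ε1 hfint hgint hptw
  -- compute the right-hand integral
  have hJ : (∫ z in (1-ε)..1, (1 - z)^2 * Real.sqrt (1 - z)) = (2/7) * ε ^ ((7:ℝ)/2) := by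
    have hsub : (∫ z in (1-ε)..1, (1 - z)^2 * Real.sqrt (1 - z))
        = ∫ u in (0:ℝ)..ε, u^2 * Real.sqrt u := by
      have := intervalIntegral.integral_comp_sub_left
        (a := 1-ε) (b := 1) (fun u => u^2 * Real.sqrt u) 1
      simpa using this
    rw [hsub]
    have hcong : Set.EqOn (fun u : ℝ => u^2 * Real.sqrt u) (fun u : ℝ => u ^ ((5:ℝ)/2))
        (Set.uIcc 0 ε) := by
      intro u hu
      have hu0 : 0 ≤ u := by
        rw [Set.uIcc_of_le (le_of_lt hε0)] at hu; exact hu.1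
      rcases eq_or_lt_of_le hu0 with h|h
      · simp only [← h]
        rw [Real.sqrt_zero, Real.zero_rpow (by norm_num)]
        ring
      · simp only
        rw [Real.sqrt_eq_rpow, ← Real.rpow_natCast u 2, ← Real.rpow_add h]
        norm_num
    rw [intervalIntegral.integral_congr hcong,
      integral_rpow (Or.inl (by norm_num : (-1:ℝ) < 5/2))]
    rw [Real.zero_rpow (by norm_num)]
    norm_num
    ring
  have hrw : (∫ z in (1-ε)..1, (5/4 * M * N) * ((1 - z)^2 * Real.sqrt (1 - z)))
      = (5/14) * ε ^ ((7:ℝ)/2) * M * N := by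
    rw [intervalIntegral.integral_const_mul, hJ]; ring
  rw [hrw] at hmono
  exact hmono
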